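/- Let λ > 0 and A < B, and let f : ℝ → ℝ be differentiable at A and B with f(A) ≠ 0 and f(B) ≠ 0. Then lim_{Δ→0⁺} (f(A) − e^{−λΔ} f(A+Δ)) / [(1 − e^{−2λΔ}) f(A)] = (−f'(A) + λ f(A)) / (2λ f(A)), and lim_{Δ→0⁺} (f(B) − e^{−λΔ} f(B−Δ)) / [(1 − e^{−2λΔ}) f(B)] = (f'(B) + λ f(B)) / (2λ f(B)). -/

import Mathlib

open Filter

lemma ar1_aux (lam : ℝ) (hlam : 0 < lam) (x s : ℝ) (f : ℝ → ℝ)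
    (hf : DifferentiableAt ℝ f x) (hx0 : f x ≠ 0) :
    Tendsto (fun Δ : ℝ =>
        (f x - Real.exp (-lam * Δ) * f (x + s * Δ)) / ((1 - Real.exp (-2 * lam * Δ)) * f x))
      (nhdsWithin 0 (Set.Ioi 0))
      (nhds ((-s * deriv f x + lam * f x) / (2 * lam * f x))) := by
  set h : ℝ → ℝ := fun Δ => Real.exp (-lam * Δ) * f (x + s * Δ) with hh
  set k : ℝ → ℝ := fun Δ => (1 - Real.exp (-2 * lam * Δ)) * f x with hk
  have hexp1 : HasDerivAt (fun Δ : ℝ => Real.exp (-lam * Δ)) (-lam) 0 := by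
    have := ((hasDerivAt_id (0:ℝ)).const_mul (-lam)).exp
    simpa using this
  have hexp2 : HasDerivAt (fun Δ : ℝ => Real.exp (-2 * lam * Δ)) (-2 * lam) 0 := by
    have := ((hasDerivAt_id (0:ℝ)).const_mul (-2 * lam)).exp
    simpa using this
  have hinner : HasDerivAt (fun Δ : ℝ => x + s * Δ) s 0 := by
    simpa using ((hasDerivAt_id (0:ℝ)).const_mul s).const_add x
  have hcomp : HasDerivAt (fun Δ : ℝ => f (x + s * Δ)) (deriv f x * s) 0 := by
    have houter : HasDerivAt f (deriv f x) ((fun Δ : ℝ => x + s * Δ) 0) := by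
      simpa using hf.hasDerivAt
    exact houter.comp 0 hinner
  have hdh : HasDerivAt h (-lam * f x + s * deriv f x) 0 := by
    have := hexp1.mul hcomp
    simp only [hh]
    exact this.congr_deriv (by simp only [mul_zero, add_zero, Real.exp_zero, one_mul]; ring)
  have hdk : HasDerivAt k (2 * lam * f x) 0 := by
    have := ((hasDerivAt_const (0:ℝ) (1:ℝ)).sub hexp2).mul_const (f x)
    simp only [hk]
    exact this.congr_deriv (by ring)
  have hsub : Set.Ioi (0:ℝ) ⊆ {(0:ℝ)}ᶜ := by
    intro y hy; simpa using ne_of_gt hy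
  have hnum : Tendsto (fun Δ : ℝ => (f x - h Δ) / Δ) (nhdsWithin 0 (Set.Ioi 0))
      (nhds (-(-lam * f x + s * deriv f x))) := by
    have h2 := (hasDerivAt_iff_tendsto_slope.mp hdh).mono_left (nhdsWithin_mono _ hsub)
    refine h2.neg.congr fun Δ => ?_
    simp only [slope_def_field, hh, sub_zero, mul_zero, Real.exp_zero, one_mul, add_zero]
    ring
  have hden : Tendsto (fun Δ : ℝ => k Δ / Δ) (nhdsWithin 0 (Set.Ioi 0))
      (nhds (2 * lam * f x)) := by
    have h2 := (hasDerivAt_iff_tendsto_slope.mp hdk).mono_left (nhdsWithin_mono _ hsub)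
    refine h2.congr fun Δ => ?_
    simp [slope_def_field, hk]
  have hdne : (2 * lam * f x) ≠ 0 := mul_ne_zero (by positivity) hx0
  have hmain := hnum.div hden hdne
  have heq : ∀ᶠ Δ in nhdsWithin (0:ℝ) (Set.Ioi 0),
      ((f x - h Δ) / Δ) / (k Δ / Δ) =
      (f x - Real.exp (-lam * Δ) * f (x + s * Δ)) / ((1 - Real.exp (-2 * lam * Δ)) * f x) := by
    filter_upwards [self_mem_nhdsWithin] with Δ hΔ
    have hΔ0 : (Δ:ℝ) ≠ 0 := ne_of_gt hΔ
    have hkne : k Δ ≠ 0 := by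
      have h1 : Real.exp (-2 * lam * Δ) < 1 := Real.exp_lt_one_iff.mpr (by nlinarith [Set.mem_Ioi.mp hΔ])
      exact mul_ne_zero (by linarith) hx0
    show (f x - h Δ) / Δ / (k Δ / Δ) = (f x - h Δ) / (k Δ)
    field_simp
  have := hmain.congr' heq
  convert this using 2
  ring

open Filter

/-- Limits of the AR(1) optimal boundary weights: with `a = e^{-λΔ}`,
`(f(A) - a f(A+Δ)) / ((1-a²) f(A)) → P_A = (-f'(A) + λ f(A))/(2λ f(A))` and
`(f(B) - a f(B-Δ)) / ((1-a²) f(B)) → P_B = (f'(B) + λ f(B))/(2λ f(B))` as `Δ → 0⁺`. -/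
theorem ar1_boundary_weight_limits (lam : ℝ) (hlam : 0 < lam)
    (A B : ℝ) (hAB : A < B) (f : ℝ → ℝ)
    (hfA : DifferentiableAt ℝ f A) (hfB : DifferentiableAt ℝ f B)
    (hA0 : f A ≠ 0) (hB0 : f B ≠ 0) :
    Tendsto (fun Δ : ℝ =>
        (f A - Real.exp (-lam * Δ) * f (A + Δ)) / ((1 - Real.exp (-2 * lam * Δ)) * f A))
      (nhdsWithin 0 (Set.Ioi 0))
      (nhds ((-deriv f A + lam * f A) / (2 * lam * f A))) ∧
    Tendsto (fun Δ : ℝ =>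
        (f B - Real.exp (-lam * Δ) * f (B - Δ)) / ((1 - Real.exp (-2 * lam * Δ)) * f B))
      (nhdsWithin 0 (Set.Ioi 0))
      (nhds ((deriv f B + lam * f B) / (2 * lam * f B))) := by
  constructor
  · simpa using ar1_aux lam hlam A 1 f hfA hA0
  · simpa [sub_eq_add_neg, neg_mul, one_mul] using ar1_aux lam hlam B (-1) f hfB hB0
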